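/- Decomposition under value sufficiency: with Z = φ(S,G) and V = v(S,G), if there exists ṽ : 𝒮 × 𝒵 → 𝒱 with v(s,g) = ṽ(s, φ(s,g)) for every (s,g) with p(s,g) > 0 (i.e. Z is value-sufficient), then I(A;V|S,Z) = 0 and consequently I(A;G|S,Z) = I(A;G|S,V) − I(A;Z|S,V). -/

import Mathlib

open scoped Classical
open Finset

/-- Joint probability `P(f = x)` of a discrete random variable `f` on the sample space
`𝒮 × 𝒢 × 𝒜` equipped with the pmf `p`. -/
noncomputable def Pr {𝒮 𝒢 𝒜 : Type*} [Fintype 𝒮] [Fintype 𝒢] [Fintype 𝒜] {X : Type*}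
    (p : 𝒮 × 𝒢 × 𝒜 → ℝ) (f : 𝒮 × 𝒢 × 𝒜 → X) (x : X) : ℝ :=
  ∑ ω : 𝒮 × 𝒢 × 𝒜, if f ω = x then p ω else 0

/-- Conditional mutual information `I(X;Y|W)` of discrete random variables that are
deterministic functions of a sample drawn from the pmf `p` on `𝒮 × 𝒢 × 𝒜`. -/
noncomputable def CMI {𝒮 𝒢 𝒜 : Type*} [Fintype 𝒮] [Fintype 𝒢] [Fintype 𝒜]
    {X Y W : Type*} [Fintype X] [Fintype Y] [Fintype W]
    (p : 𝒮 × 𝒢 × 𝒜 → ℝ) (fX : 𝒮 × 𝒢 × 𝒜 → X) (fY : 𝒮 × 𝒢 × 𝒜 → Y)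
    (fW : 𝒮 × 𝒢 × 𝒜 → W) : ℝ :=
  ∑ x : X, ∑ y : Y, ∑ w : W,
    if 0 < Pr p (fun ω => (fX ω, fY ω, fW ω)) (x, y, w) then
      Pr p (fun ω => (fX ω, fY ω, fW ω)) (x, y, w) *
        Real.log ((Pr p (fun ω => (fX ω, fY ω, fW ω)) (x, y, w) * Pr p fW w) /
          (Pr p (fun ω => (fX ω, fW ω)) (x, w) * Pr p (fun ω => (fY ω, fW ω)) (y, w)))
    else 0

/-- Marginal `p(s,g) := ∑ₐ p(s,g,a)`. -/
noncomputable def pSG {𝒮 𝒢 𝒜 : Type*} [Fintype 𝒜] (p : 𝒮 × 𝒢 × 𝒜 → ℝ) (s : 𝒮) (g : 𝒢) : ℝ :=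
  ∑ a : 𝒜, p (s, g, a)

/-- Conditional `p(a|s,g) := p(s,g,a) / p(s,g)`. -/
noncomputable def pA {𝒮 𝒢 𝒜 : Type*} [Fintype 𝒜] (p : 𝒮 × 𝒢 × 𝒜 → ℝ) (s : 𝒮) (g : 𝒢)
    (a : 𝒜) : ℝ :=
  p (s, g, a) / pSG p s g

section Aux
variable {𝒮 𝒢 𝒜 : Type*} [Fintype 𝒮] [Fintype 𝒢] [Fintype 𝒜] {p : 𝒮 × 𝒢 × 𝒜 → ℝ}

lemma Pr_nonneg (hp0 : ∀ ω, 0 ≤ p ω) {X : Type*} (f : 𝒮 × 𝒢 × 𝒜 → X) (x : X) :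
    0 ≤ Pr p f x := by
  apply Finset.sum_nonneg
  intro ω _
  split_ifs
  exacts [hp0 ω, le_rfl]

lemma Pr_pos (hp0 : ∀ ω, 0 ≤ p ω) {X : Type*} {f : 𝒮 × 𝒢 × 𝒜 → X} {x : X}
    {ω : 𝒮 × 𝒢 × 𝒜} (hω : 0 < p ω) (hf : f ω = x) : 0 < Pr p f x := by
  have h := Finset.single_le_sum (f := fun ω' => if f ω' = x then p ω' else 0)
    (fun i _ => by split_ifs; exacts [hp0 i, le_rfl]) (Finset.mem_univ ω)
  rw [if_pos hf] at h
  exact lt_of_lt_of_le hω h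

lemma Pr_congr (hp0 : ∀ ω, 0 ≤ p ω) {X Y : Type*} {f : 𝒮 × 𝒢 × 𝒜 → X} {g : 𝒮 × 𝒢 × 𝒜 → Y}
    {x : X} {y : Y} (h : ∀ ω, 0 < p ω → (f ω = x ↔ g ω = y)) : Pr p f x = Pr p g y := by
  apply Finset.sum_congr rfl
  intro ω _
  rcases (hp0 ω).eq_or_lt with h0 | h0
  · simp [← h0]
  · rw [if_congr (h ω h0) rfl rfl]

lemma sum_ite_pos_mul (hp0 : ∀ ω, 0 ≤ p ω) {X : Type*} [Fintype X]
    (f : 𝒮 × 𝒢 × 𝒜 → X) (F : X → ℝ) :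
    (∑ x : X, if 0 < Pr p f x then Pr p f x * F x else 0) = ∑ ω, p ω * F (f ω) := by
  have h1 : ∀ x, (if 0 < Pr p f x then Pr p f x * F x else 0) = Pr p f x * F x := by
    intro x
    split_ifs with h
    · rfl
    · rw [le_antisymm (not_lt.1 h) (Pr_nonneg hp0 f x), zero_mul]
  simp_rw [h1, Pr, Finset.sum_mul, ite_mul, zero_mul]
  rw [Finset.sum_comm]
  simp [Finset.sum_ite_eq]

lemma CMI_eq_sum (hp0 : ∀ ω, 0 ≤ p ω) {X Y W : Type*} [Fintype X] [Fintype Y] [Fintype W]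
    (fX : 𝒮 × 𝒢 × 𝒜 → X) (fY : 𝒮 × 𝒢 × 𝒜 → Y) (fW : 𝒮 × 𝒢 × 𝒜 → W) :
    CMI p fX fY fW = ∑ ω, p ω *
      Real.log ((Pr p (fun ω' => (fX ω', fY ω', fW ω')) (fX ω, fY ω, fW ω) * Pr p fW (fW ω)) /
        (Pr p (fun ω' => (fX ω', fW ω')) (fX ω, fW ω) *
          Pr p (fun ω' => (fY ω', fW ω')) (fY ω, fW ω))) := by
  have key := sum_ite_pos_mul hp0 (fun ω => (fX ω, fY ω, fW ω))
    (fun t => Real.log ((Pr p (fun ω' => (fX ω', fY ω', fW ω')) t * Pr p fW t.2.2) /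
      (Pr p (fun ω' => (fX ω', fW ω')) (t.1, t.2.2) *
        Pr p (fun ω' => (fY ω', fW ω')) (t.2.1, t.2.2))))
  rw [CMI, ← key, Fintype.sum_prod_type]
  simp only [Fintype.sum_prod_type]

end Aux

/-- **Decomposition under value sufficiency.** With `Z = φ(S,G)` and
`V = v(S,G)`, if `v` factors through `(s, φ(s,g))` on the support of `p` (value
sufficiency), then `I(A;V|S,Z) = 0` and `I(A;G|S,Z) = I(A;G|S,V) − I(A;Z|S,V)`. -/
theorem cmi_decomposition_of_value_sufficiency {𝒮 𝒢 𝒜 𝒵 𝒱 : Type*}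
    [Fintype 𝒮] [Fintype 𝒢] [Fintype 𝒜] [Fintype 𝒵] [Fintype 𝒱]
    [Nonempty 𝒮] [Nonempty 𝒢] [Nonempty 𝒜] [Nonempty 𝒵] [Nonempty 𝒱]
    (p : 𝒮 × 𝒢 × 𝒜 → ℝ) (hp0 : ∀ ω, 0 ≤ p ω) (hp1 : ∑ ω : 𝒮 × 𝒢 × 𝒜, p ω = 1)
    (φ : 𝒮 × 𝒢 → 𝒵) (v : 𝒮 × 𝒢 → 𝒱)
    (hvs : ∃ vTilde : 𝒮 × 𝒵 → 𝒱, ∀ s g, 0 < pSG p s g → v (s, g) = vTilde (s, φ (s, g))) :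
    CMI p (fun ω => ω.2.2) (fun ω => v (ω.1, ω.2.1))
        (fun ω => (ω.1, φ (ω.1, ω.2.1))) = 0 ∧
      CMI p (fun ω => ω.2.2) (fun ω => ω.2.1) (fun ω => (ω.1, φ (ω.1, ω.2.1))) =
        CMI p (fun ω => ω.2.2) (fun ω => ω.2.1) (fun ω => (ω.1, v (ω.1, ω.2.1))) -
          CMI p (fun ω => ω.2.2) (fun ω => φ (ω.1, ω.2.1))
            (fun ω => (ω.1, v (ω.1, ω.2.1))) := by
  obtain ⟨vT, hvT⟩ := hvs
  have hpsg : ∀ s g a, 0 < p (s, g, a) → 0 < pSG p s g := by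
    intro s g a h
    have hle := Finset.single_le_sum (f := fun a' => p (s, g, a'))
      (fun i _ => hp0 _) (Finset.mem_univ a)
    exact lt_of_lt_of_le h hle
  constructor
  · rw [CMI_eq_sum hp0]
    apply Finset.sum_eq_zero
    rintro ⟨s, g, a⟩ -
    dsimp only
    rcases (hp0 (s, g, a)).eq_or_lt with h0 | h0
    · rw [← h0, zero_mul]
    · have hx : v (s, g) = vT (s, φ (s, g)) := hvT s g (hpsg s g a h0)
      have e1 : Pr p (fun ω' => (ω'.2.2, v (ω'.1, ω'.2.1), (ω'.1, φ (ω'.1, ω'.2.1))))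
          (a, v (s, g), (s, φ (s, g))) =
          Pr p (fun ω' => (ω'.2.2, (ω'.1, φ (ω'.1, ω'.2.1)))) (a, (s, φ (s, g))) := by
        apply Pr_congr hp0
        rintro ⟨s', g', a'⟩ hp'
        have hv' : v (s', g') = vT (s', φ (s', g')) := hvT s' g' (hpsg s' g' a' hp')
        simp only [Prod.mk.injEq]
        constructor
        · rintro ⟨ha, _, hs, hz⟩; exact ⟨ha, hs, hz⟩
        · rintro ⟨ha, hs, hz⟩
          subst hs
          exact ⟨ha, by rw [hv', hz, ← hx], rfl, hz⟩
      have e2 : Pr p (fun ω' => (v (ω'.1, ω'.2.1), (ω'.1, φ (ω'.1, ω'.2.1))))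
          (v (s, g), (s, φ (s, g))) =
          Pr p (fun ω' => (ω'.1, φ (ω'.1, ω'.2.1))) (s, φ (s, g)) := by
        apply Pr_congr hp0
        rintro ⟨s', g', a'⟩ hp'
        have hv' : v (s', g') = vT (s', φ (s', g')) := hvT s' g' (hpsg s' g' a' hp')
        simp only [Prod.mk.injEq]
        constructor
        · rintro ⟨_, hs, hz⟩; exact ⟨hs, hz⟩
        · rintro ⟨hs, hz⟩
          subst hs
          exact ⟨by rw [hv', hz, ← hx], rfl, hz⟩
      rw [e1, e2]
      have hPAZ : 0 < Pr p (fun ω' => (ω'.2.2, (ω'.1, φ (ω'.1, ω'.2.1)))) (a, (s, φ (s, g))) :=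
        Pr_pos hp0 h0 rfl
      have hPZ : 0 < Pr p (fun ω' => (ω'.1, φ (ω'.1, ω'.2.1))) (s, φ (s, g)) :=
        Pr_pos hp0 h0 rfl
      rw [div_self (mul_pos hPAZ hPZ).ne', Real.log_one, mul_zero]
  · rw [CMI_eq_sum hp0, CMI_eq_sum hp0, CMI_eq_sum hp0, ← Finset.sum_sub_distrib]
    apply Finset.sum_congr rfl
    rintro ⟨s, g, a⟩ -
    dsimp only
    rcases (hp0 (s, g, a)).eq_or_lt with h0 | h0
    · rw [← h0]; ring
    · have hx : v (s, g) = vT (s, φ (s, g)) := hvT s g (hpsg s g a h0)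
      have hJ1 : Pr p (fun ω' => (ω'.2.2, ω'.2.1, (ω'.1, φ (ω'.1, ω'.2.1))))
          (a, g, (s, φ (s, g))) = Pr p (fun ω' => ω') (s, g, a) := by
        apply Pr_congr hp0
        rintro ⟨s', g', a'⟩ _
        simp only [Prod.mk.injEq]
        constructor
        · rintro ⟨ha, hg, hs, _⟩; exact ⟨hs, hg, ha⟩
        · rintro ⟨hs, hg, ha⟩; subst hs; subst hg; exact ⟨ha, rfl, rfl, rfl⟩
      have hJ2 : Pr p (fun ω' => (ω'.2.2, ω'.2.1, (ω'.1, v (ω'.1, ω'.2.1))))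
          (a, g, (s, v (s, g))) = Pr p (fun ω' => ω') (s, g, a) := by
        apply Pr_congr hp0
        rintro ⟨s', g', a'⟩ _
        simp only [Prod.mk.injEq]
        constructor
        · rintro ⟨ha, hg, hs, _⟩; exact ⟨hs, hg, ha⟩
        · rintro ⟨hs, hg, ha⟩; subst hs; subst hg; exact ⟨ha, rfl, rfl, rfl⟩
      have hGS1 : Pr p (fun ω' => (ω'.2.1, (ω'.1, φ (ω'.1, ω'.2.1))))
          (g, (s, φ (s, g))) = Pr p (fun ω' => (ω'.1, ω'.2.1)) (s, g) := by
        apply Pr_congr hp0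
        rintro ⟨s', g', a'⟩ _
        simp only [Prod.mk.injEq]
        constructor
        · rintro ⟨hg, hs, _⟩; exact ⟨hs, hg⟩
        · rintro ⟨hs, hg⟩; subst hs; subst hg; exact ⟨rfl, rfl, rfl⟩
      have hGS2 : Pr p (fun ω' => (ω'.2.1, (ω'.1, v (ω'.1, ω'.2.1))))
          (g, (s, v (s, g))) = Pr p (fun ω' => (ω'.1, ω'.2.1)) (s, g) := by
        apply Pr_congr hp0
        rintro ⟨s', g', a'⟩ _
        simp only [Prod.mk.injEq]
        constructor
        · rintro ⟨hg, hs, _⟩; exact ⟨hs, hg⟩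
        · rintro ⟨hs, hg⟩; subst hs; subst hg; exact ⟨rfl, rfl, rfl⟩
      have hAZ3 : Pr p (fun ω' => (ω'.2.2, φ (ω'.1, ω'.2.1), (ω'.1, v (ω'.1, ω'.2.1))))
          (a, φ (s, g), (s, v (s, g))) =
          Pr p (fun ω' => (ω'.2.2, (ω'.1, φ (ω'.1, ω'.2.1)))) (a, (s, φ (s, g))) := by
        apply Pr_congr hp0
        rintro ⟨s', g', a'⟩ hp'
        have hv' : v (s', g') = vT (s', φ (s', g')) := hvT s' g' (hpsg s' g' a' hp')
        simp only [Prod.mk.injEq]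
        constructor
        · rintro ⟨ha, hz, hs, _⟩; exact ⟨ha, hs, hz⟩
        · rintro ⟨ha, hs, hz⟩
          subst hs
          exact ⟨ha, hz, rfl, by rw [hv', hz, ← hx]⟩
      have hZ3 : Pr p (fun ω' => (φ (ω'.1, ω'.2.1), (ω'.1, v (ω'.1, ω'.2.1))))
          (φ (s, g), (s, v (s, g))) =
          Pr p (fun ω' => (ω'.1, φ (ω'.1, ω'.2.1))) (s, φ (s, g)) := by
        apply Pr_congr hp0
        rintro ⟨s', g', a'⟩ hp'
        have hv' : v (s', g') = vT (s', φ (s', g')) := hvT s' g' (hpsg s' g' a' hp')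
        simp only [Prod.mk.injEq]
        constructor
        · rintro ⟨hz, hs, _⟩; exact ⟨hs, hz⟩
        · rintro ⟨hs, hz⟩
          subst hs
          exact ⟨hz, rfl, by rw [hv', hz, ← hx]⟩
      rw [hJ1, hJ2, hGS1, hGS2, hAZ3, hZ3]
      have h1 : 0 < Pr p (fun ω' => ω') (s, g, a) := Pr_pos hp0 h0 rfl
      have h2 : 0 < Pr p (fun ω' => (ω'.1, ω'.2.1)) (s, g) := Pr_pos hp0 h0 rfl
      have h3 : 0 < Pr p (fun ω' => (ω'.2.2, (ω'.1, φ (ω'.1, ω'.2.1)))) (a, (s, φ (s, g))) :=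
        Pr_pos hp0 h0 rfl
      have h4 : 0 < Pr p (fun ω' => (ω'.1, φ (ω'.1, ω'.2.1))) (s, φ (s, g)) :=
        Pr_pos hp0 h0 rfl
      have h5 : 0 < Pr p (fun ω' => (ω'.2.2, (ω'.1, v (ω'.1, ω'.2.1)))) (a, (s, v (s, g))) :=
        Pr_pos hp0 h0 rfl
      have h6 : 0 < Pr p (fun ω' => (ω'.1, v (ω'.1, ω'.2.1))) (s, v (s, g)) :=
        Pr_pos hp0 h0 rfl
      set J := Pr p (fun ω' => ω') (s, g, a)
      set GS := Pr p (fun ω' => (ω'.1, ω'.2.1)) (s, g)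
      set PAZ := Pr p (fun ω' => (ω'.2.2, (ω'.1, φ (ω'.1, ω'.2.1)))) (a, (s, φ (s, g)))
      set PZ := Pr p (fun ω' => (ω'.1, φ (ω'.1, ω'.2.1))) (s, φ (s, g))
      set PAX := Pr p (fun ω' => (ω'.2.2, (ω'.1, v (ω'.1, ω'.2.1)))) (a, (s, v (s, g)))
      set PX := Pr p (fun ω' => (ω'.1, v (ω'.1, ω'.2.1))) (s, v (s, g))
      rw [← mul_sub, ← Real.log_div (by positivity) (by positivity)]
      congr 2
      field_simp
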